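/- (Bihari's inequality) Let y, f be non-negative functions on [0,∞), w a continuous non-decreasing function on [0,∞) with w(u) > 0 for u > 0, and α ≥ 0. If y(t) ≤ α + ∫₀ᵗ f(s) w(y(s)) ds for all t ≥ 0, then y(t) ≤ G⁻¹(G(α) + ∫₀ᵗ f(s) ds) for all t ∈ [0,T], where G(x) = ∫_{x₀}^x dt/w(t) for some x₀ > 0 and T is chosen so that G(α) + ∫₀ᵗ f(s) ds lies in the domain of G⁻¹ for all t ∈ [0,T]. -/

import Mathlib

open MeasureTheory Set

/-- Bihari's inequality: if `y(t) ≤ α + ∫₀ᵗ f(s) w(y(s)) ds`, then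
`y(t) ≤ G⁻¹(G(α) + ∫₀ᵗ f(s) ds)` on `[0,T]`, where `G(x) = ∫_{x₀}^x dt/w(t)`. -/
theorem bihari_inequality
    (y f w : ℝ → ℝ) (α x₀ T : ℝ)
    (hy0 : ∀ t ≥ (0 : ℝ), 0 ≤ y t) (hf0 : ∀ t ≥ (0 : ℝ), 0 ≤ f t)
    (hw_cont : ContinuousOn w (Set.Ici 0)) (hw_mono : MonotoneOn w (Set.Ici 0))
    (hw_pos : ∀ u > (0 : ℝ), 0 < w u)
    (hα : 0 ≤ α) (hx₀ : 0 < x₀) (hT : 0 ≤ T)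
    (hyint : ∀ t, IntervalIntegrable (fun s => f s * w (y s)) MeasureTheory.volume 0 t)
    (hfint : ∀ t, IntervalIntegrable f MeasureTheory.volume 0 t)
    (G Ginv : ℝ → ℝ)
    (hG : ∀ x, G x = ∫ t in x₀..x, 1 / w t)
    (hGinv : ∀ x ≥ (0 : ℝ), Ginv (G x) = x)
    (hmain : ∀ t ≥ (0 : ℝ), y t ≤ α + ∫ s in (0 : ℝ)..t, f s * w (y s))
    (hdom : ∀ t ∈ Set.Icc (0 : ℝ) T, ∃ x ≥ (0 : ℝ), G x = G α + ∫ s in (0 : ℝ)..t, f s) :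
    ∀ t ∈ Set.Icc (0 : ℝ) T, y t ≤ Ginv (G α + ∫ s in (0 : ℝ)..t, f s) := by
  set g : ℝ → ℝ := fun s => f s * w (y s) with hgdef
  -- w is nonnegative at 0, hence on all of [0,∞)
  have hw0 : 0 ≤ w 0 := by
    have hc : ContinuousWithinAt w (Set.Ici 0) 0 := hw_cont 0 (Set.mem_Ici.mpr le_rfl)
    have hc' : Filter.Tendsto w (nhdsWithin 0 (Set.Ioi 0)) (nhds (w 0)) :=
      hc.tendsto.mono_left (nhdsWithin_mono 0 Ioi_subset_Ici_self)
    exact ge_of_tendsto hc'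
      (Filter.eventually_of_mem self_mem_nhdsWithin fun u hu => (hw_pos u hu).le)
  have hwnn : ∀ u : ℝ, 0 ≤ u → 0 ≤ w u := fun u hu =>
    hw0.trans (hw_mono self_mem_Ici hu hu)
  have hgnn : ∀ s : ℝ, 0 ≤ s → 0 ≤ g s := fun s hs =>
    mul_nonneg (hf0 s hs) (hwnn _ (hy0 s hs))
  have hgint : ∀ a b : ℝ, IntervalIntegrable g volume a b := fun a b =>
    (hyint a).symm.trans (hyint b)
  have hfint' : ∀ a b : ℝ, IntervalIntegrable f volume a b := fun a b =>
    (hfint a).symm.trans (hfint b)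
  have hgsplit : ∀ a b : ℝ, (∫ s in (0:ℝ)..b, g s) - ∫ s in (0:ℝ)..a, g s
      = ∫ s in a..b, g s := fun a b =>
    intervalIntegral.integral_interval_sub_left (hgint 0 b) (hgint 0 a)
  have hfsplit : ∀ a b : ℝ, (∫ s in (0:ℝ)..b, f s) - ∫ s in (0:ℝ)..a, f s
      = ∫ s in a..b, f s := fun a b =>
    intervalIntegral.integral_interval_sub_left (hfint' 0 b) (hfint' 0 a)
  have hgI_nonneg : ∀ a b : ℝ, 0 ≤ a → a ≤ b → 0 ≤ ∫ s in a..b, g s := fun a b ha hab =>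
    intervalIntegral.integral_nonneg hab fun u hu => hgnn u (ha.trans hu.1)
  have hfI_nonneg : ∀ a b : ℝ, 0 ≤ a → a ≤ b → 0 ≤ ∫ s in a..b, f s := fun a b ha hab =>
    intervalIntegral.integral_nonneg hab fun u hu => hf0 u (ha.trans hu.1)
  -- Dichotomy on integrability of 1/w near 0
  by_cases hI : IntervalIntegrable (fun u => 1 / w u) volume 0 x₀
  swap
  · -- junk case: G 0 = G x₀ = 0, contradicting injectivity via Ginv
    exfalso
    have h0 : G 0 = 0 := by
      rw [hG, intervalIntegral.integral_symm, intervalIntegral.integral_undef hI, neg_zero]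
    have h1 : G x₀ = 0 := by rw [hG, intervalIntegral.integral_same]
    have e0 := hGinv 0 le_rfl
    have e1 := hGinv x₀ hx₀.le
    rw [h0] at e0; rw [h1] at e1
    exact hx₀.ne' (e1.symm.trans e0)
  -- local integrability of 1/w on [0,∞)
  have hWint0 : ∀ c : ℝ, 0 ≤ c → IntervalIntegrable (fun u => 1 / w u) volume 0 c := by
    intro c hc
    rcases le_total c x₀ with h | h
    · exact hI.mono_set (by
        rw [uIcc_of_le hc, uIcc_of_le hx₀.le]
        exact Icc_subset_Icc le_rfl h)
    · refine hI.trans (ContinuousOn.intervalIntegrable ?_)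
      apply ContinuousOn.div continuousOn_const
      · apply hw_cont.mono
        intro u hu
        rw [uIcc_of_le h] at hu
        exact le_trans hx₀.le hu.1
      · intro u hu
        rw [uIcc_of_le h] at hu
        exact (hw_pos u (lt_of_lt_of_le hx₀ hu.1)).ne'
  have hWint : ∀ a b : ℝ, 0 ≤ a → 0 ≤ b → IntervalIntegrable (fun u => 1 / w u) volume a b :=
    fun a b ha hb => (hWint0 a ha).symm.trans (hWint0 b hb)
  have hGadd : ∀ a b : ℝ, 0 ≤ a → 0 ≤ b → G b - G a = ∫ u in a..b, 1 / w u := by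
    intro a b ha hb
    rw [hG, hG]
    exact intervalIntegral.integral_interval_sub_left (hWint x₀ b hx₀.le hb)
      (hWint x₀ a hx₀.le ha)
  have hGmono : ∀ a b : ℝ, 0 ≤ a → a ≤ b → G a ≤ G b := by
    intro a b ha hab
    have h := hGadd a b ha (ha.trans hab)
    have h2 : 0 ≤ ∫ u in a..b, 1 / w u :=
      intervalIntegral.integral_nonneg hab fun u hu =>
        one_div_nonneg.mpr (hwnn u (ha.trans hu.1))
    linarith
  -- KEY CLAIM
  have key : ∀ β > (0:ℝ), ∀ ε > (0:ℝ), ∀ t₀, 0 ≤ t₀ →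
      G (α + β + ∫ s in (0:ℝ)..t₀, g s)
        ≤ G (α + β) + (1 + ε) * ∫ s in (0:ℝ)..t₀, f s := by
    intro β hβ ε hε t₀ ht₀
    set Z : ℝ → ℝ := fun t => α + β + ∫ s in (0:ℝ)..t, g s with hZdef
    set F : ℝ → ℝ := fun t => ∫ s in (0:ℝ)..t, f s with hFdef
    have hZpos : ∀ t : ℝ, 0 ≤ t → 0 < Z t := by
      intro t ht
      have := hgI_nonneg 0 t le_rfl ht
      simp only [hZdef]
      linarith
    have hZm : ∀ a b : ℝ, 0 ≤ a → a ≤ b → Z a ≤ Z b := by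
      intro a b ha hab
      have h1 := hgsplit a b
      have h2 := hgI_nonneg a b ha hab
      simp only [hZdef]
      linarith
    have hZc : Continuous Z := by
      apply continuous_const.add
      exact intervalIntegral.continuous_primitive hgint 0
    have hFc : Continuous F := intervalIntegral.continuous_primitive hfint' 0
    -- the primitive of 1/w and continuity of G ∘ Z on [0, t₀]
    set M : ℝ := Z t₀ with hMdef
    have hM0 : 0 ≤ M := (hZpos t₀ ht₀).le
    have hHcont : ContinuousOn (fun x => ∫ u in (0:ℝ)..x, 1 / w u) (Set.Icc 0 M) := by
      have := intervalIntegral.continuousOn_primitive_interval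
        (f := fun u => 1 / w u) (μ := volume) (a := 0) (b := M)
        ((intervalIntegrable_iff_integrableOn_Icc_of_le hM0).mp (hWint0 M hM0) |>.mono_set
          (by rw [uIcc_of_le hM0]))
      rwa [uIcc_of_le hM0] at this
    have hGZcont : ContinuousOn (fun t => G (Z t)) (Set.Icc 0 t₀) := by
      have hmaps : Set.MapsTo Z (Set.Icc 0 t₀) (Set.Icc 0 M) := by
        intro t ht
        exact ⟨(hZpos t ht.1).le, hZm t t₀ ht.1 ht.2⟩
      have hcomp : ContinuousOn (fun t => G 0 + ∫ u in (0:ℝ)..(Z t), 1 / w u)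
          (Set.Icc 0 t₀) :=
        continuousOn_const.add (hHcont.comp hZc.continuousOn hmaps)
      apply hcomp.congr
      intro t ht
      have := hGadd 0 (Z t) le_rfl (hZpos t ht.1).le
      linarith
    -- the set S and its sup
    set S : Set ℝ := Set.Icc 0 t₀ ∩
      {t | G (Z t) - G (α + β) - (1 + ε) * F t ≤ 0} with hSdef
    have h0S : (0:ℝ) ∈ S := by
      constructor
      · exact ⟨le_rfl, ht₀⟩
      · show G (Z 0) - G (α + β) - (1 + ε) * F 0 ≤ 0
        have hZ0 : Z 0 = α + β := by
          simp [hZdef, intervalIntegral.integral_same]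
        have hF0 : F 0 = 0 := by simp [hFdef, intervalIntegral.integral_same]
        rw [hZ0, hF0]; ring_nf; simp
    have hSbdd : BddAbove S := ⟨t₀, fun x hx => hx.1.2⟩
    have hSclosed : IsClosed S := by
      have hφ : ContinuousOn (fun t => G (Z t) - G (α + β) - (1 + ε) * F t)
          (Set.Icc 0 t₀) :=
        (hGZcont.sub continuousOn_const).sub
          (continuousOn_const.mul hFc.continuousOn)
      have hcl := hφ.preimage_isClosed_of_isClosed isClosed_Icc
        (isClosed_Iic (a := (0:ℝ)))
      convert hcl using 1
      rfl
    have hτS : sSup S ∈ S := hSclosed.csSup_mem ⟨0, h0S⟩ hSbdd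
    set τ := sSup S with hτdef
    have hτIcc : τ ∈ Set.Icc 0 t₀ := hτS.1
    rcases eq_or_lt_of_le hτIcc.2 with heq | hlt
    · -- τ = t₀ : done
      have h := hτS.2
      rw [heq] at h
      simp only [Set.mem_setOf_eq, hZdef, hFdef] at h
      linarith
    · exfalso
      set c := w (Z τ) with hcdef
      have hc : 0 < c := hw_pos _ (hZpos τ hτIcc.1)
      have hcont : ContinuousWithinAt (fun t => w (Z t)) (Set.Icc 0 t₀) τ := by
        have hmaps : Set.MapsTo Z (Set.Icc 0 t₀) (Set.Ici 0) := fun t ht =>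
          (hZpos t ht.1).le
        exact (hw_cont.comp hZc.continuousOn hmaps).continuousWithinAt hτIcc
      have hlt' : c < (1 + ε) * c := by nlinarith
      have hev : {t | w (Z t) < (1 + ε) * c} ∈ nhdsWithin τ (Set.Icc 0 t₀) :=
        hcont.tendsto.eventually_lt_const hlt'
      rw [Metric.mem_nhdsWithin_iff] at hev
      obtain ⟨δ, hδ, hball⟩ := hev
      set t := min (τ + δ / 2) t₀ with htdef
      have hτt : τ < t := lt_min (by linarith) hlt
      have htIcc : t ∈ Set.Icc 0 t₀ := ⟨le_trans hτIcc.1 hτt.le, min_le_right _ _⟩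
      have hwt : w (Z t) < (1 + ε) * c := by
        apply hball
        constructor
        · rw [Metric.mem_ball, Real.dist_eq, abs_of_nonneg (by linarith)]
          have := min_le_left (τ + δ / 2) t₀
          have ht' : t ≤ τ + δ / 2 := min_le_left _ _
          linarith
        · exact htIcc
      -- estimates
      have h1 : Z t - Z τ = ∫ s in τ..t, g s := by
        simp only [hZdef]
        have := hgsplit τ t
        linarith
      have h2 : (∫ s in τ..t, g s) ≤ (1 + ε) * c * (F t - F τ) := by
        have hFd : F t - F τ = ∫ s in τ..t, f s := hfsplit τ t
        rw [hFd, ← intervalIntegral.integral_const_mul]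
        apply intervalIntegral.integral_mono_on hτt.le (hgint τ t)
          ((hfint' τ t).const_mul _)
        intro s hs
        have hs0 : 0 ≤ s := le_trans hτIcc.1 hs.1
        have hys : y s ≤ Z t := by
          have h3 := hmain s hs0
          have h4 : Z s ≤ Z t := hZm s t hs0 hs.2
          simp only [hZdef] at h4 ⊢
          simp only [hgdef] at h3
          linarith
        have hwys : w (y s) ≤ w (Z t) :=
          hw_mono (hy0 s hs0) (hZpos t htIcc.1).le hys
        have : w (y s) ≤ (1 + ε) * c := le_trans hwys hwt.le
        calc g s = f s * w (y s) := rfl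
          _ ≤ f s * ((1 + ε) * c) := mul_le_mul_of_nonneg_left this (hf0 s hs0)
          _ = (1 + ε) * c * f s := by ring
      have hZτt : Z τ ≤ Z t := hZm τ t hτIcc.1 hτt.le
      have h3 : G (Z t) - G (Z τ) ≤ (Z t - Z τ) * (1 / c) := by
        rw [hGadd (Z τ) (Z t) (hZpos τ hτIcc.1).le (hZpos t htIcc.1).le]
        calc (∫ u in (Z τ)..(Z t), 1 / w u)
            ≤ ∫ _u in (Z τ)..(Z t), 1 / c := by
              apply intervalIntegral.integral_mono_on hZτt
                (hWint _ _ (hZpos τ hτIcc.1).le (hZpos t htIcc.1).le)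
                intervalIntegrable_const
              intro u hu
              have hcu : c ≤ w u :=
                hw_mono (hZpos τ hτIcc.1).le ((hZpos τ hτIcc.1).le.trans hu.1) hu.1
              exact one_div_le_one_div_of_le hc hcu
          _ = (Z t - Z τ) * (1 / c) := by
              rw [intervalIntegral.integral_const, smul_eq_mul]
      have h4 : (∫ s in τ..t, g s) * (1 / c) ≤ ((1 + ε) * c * (F t - F τ)) * (1 / c) :=
        mul_le_mul_of_nonneg_right h2 (by positivity)
      have h5 : ((1 + ε) * c * (F t - F τ)) * (1 / c) = (1 + ε) * (F t - F τ) := by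
        field_simp
      have hτ2 : G (Z τ) - G (α + β) - (1 + ε) * F τ ≤ 0 := hτS.2
      have htS : t ∈ S := by
        refine ⟨htIcc, ?_⟩
        show G (Z t) - G (α + β) - (1 + ε) * F t ≤ 0
        rw [h1] at h3
        linarith
      exact absurd (le_csSup hSbdd htS) (not_le.mpr hτt)
  -- conclusion
  intro t ht
  obtain ⟨x, hx0, hGx⟩ := hdom t ht
  have hztnn : 0 ≤ α + ∫ s in (0:ℝ)..t, g s := by
    have := hgI_nonneg 0 t le_rfl ht.1
    linarith
  -- limit ε → 0⁺
  have hkey : G (α + ∫ s in (0:ℝ)..t, g s) ≤ G α + ∫ s in (0:ℝ)..t, f s := by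
    have hev : ∀ᶠ ε in nhdsWithin (0:ℝ) (Set.Ioi 0),
        G (α + ∫ s in (0:ℝ)..t, g s)
          ≤ G (α + ε) + (1 + ε) * ∫ s in (0:ℝ)..t, f s := by
      apply Filter.eventually_of_mem self_mem_nhdsWithin
      intro ε hε
      have hε' : (0:ℝ) < ε := hε
      refine le_trans (hGmono _ _ hztnn (by linarith)) (key ε hε' ε hε' t ht.1)
    have htend : Filter.Tendsto
        (fun ε => G (α + ε) + (1 + ε) * ∫ s in (0:ℝ)..t, f s)
        (nhdsWithin (0:ℝ) (Set.Ioi 0))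
        (nhds (G α + ∫ s in (0:ℝ)..t, f s)) := by
      have hH : ContinuousOn (fun x => ∫ u in (0:ℝ)..x, 1 / w u)
          (Set.Icc 0 (α + 1)) := by
        have h := intervalIntegral.continuousOn_primitive_interval
          (f := fun u => 1 / w u) (μ := volume) (a := 0) (b := α + 1)
          ((intervalIntegrable_iff_integrableOn_Icc_of_le (by linarith)).mp
            (hWint0 (α+1) (by linarith)) |>.mono_set (by rw [uIcc_of_le (by linarith : (0:ℝ) ≤ α+1)]))
        rwa [uIcc_of_le (by linarith : (0:ℝ) ≤ α+1)] at h
      have hmapα : Filter.Tendsto (fun ε : ℝ => α + ε) (nhdsWithin 0 (Set.Ioi 0))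
          (nhdsWithin α (Set.Icc 0 (α + 1))) := by
        apply tendsto_nhdsWithin_of_tendsto_nhds_of_eventually_within
        · have : Filter.Tendsto (fun ε : ℝ => α + ε) (nhds 0) (nhds (α + 0)) :=
            (continuous_const.add continuous_id).tendsto 0
          rw [add_zero] at this
          exact this.mono_left nhdsWithin_le_nhds
        · apply Filter.eventually_of_mem (Ioo_mem_nhdsGT_of_mem
            (⟨le_rfl, one_pos⟩ : (0:ℝ) ∈ Set.Ico 0 1))
          intro ε hε
          exact ⟨by linarith [hε.1.le, hα], by linarith [hε.2.le]⟩
      have hαIcc : α ∈ Set.Icc 0 (α + 1) := ⟨hα, by linarith⟩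
      have hGα : Filter.Tendsto (fun ε : ℝ => G (α + ε)) (nhdsWithin 0 (Set.Ioi 0))
          (nhds (G α)) := by
        have h1 : Filter.Tendsto (fun ε : ℝ => G 0 + ∫ u in (0:ℝ)..(α + ε), 1 / w u)
            (nhdsWithin 0 (Set.Ioi 0)) (nhds (G 0 + ∫ u in (0:ℝ)..α, 1 / w u)) :=
          tendsto_const_nhds.add (((hH.continuousWithinAt hαIcc).tendsto).comp hmapα)
        have h2 : G α = G 0 + ∫ u in (0:ℝ)..α, 1 / w u := by
          have := hGadd 0 α le_rfl hα; linarith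
        rw [← h2] at h1
        apply h1.congr'
        apply Filter.eventually_of_mem self_mem_nhdsWithin
        intro ε hε
        have hε' : (0:ℝ) < ε := hε
        have := hGadd 0 (α + ε) le_rfl (by linarith)
        linarith
      have hmul : Filter.Tendsto (fun ε : ℝ => (1 + ε) * ∫ s in (0:ℝ)..t, f s)
          (nhdsWithin 0 (Set.Ioi 0)) (nhds ((1 + 0) * ∫ s in (0:ℝ)..t, f s)) := by
        exact (((continuous_const.add continuous_id).mul continuous_const).tendsto 0).mono_left
          nhdsWithin_le_nhds
      rw [add_zero, one_mul] at hmul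
      exact hGα.add hmul
    exact ge_of_tendsto htend hev
  -- finish: compare with x
  have hle : α + (∫ s in (0:ℝ)..t, g s) ≤ x := by
    by_contra h
    push_neg at h
    have h1 : G x ≤ G (α + ∫ s in (0:ℝ)..t, g s) := hGmono x _ hx0 h.le
    have h2 : G x = G (α + ∫ s in (0:ℝ)..t, g s) := by
      rw [hGx]; rw [hGx] at h1
      exact le_antisymm h1 hkey
    have e1 := hGinv x hx0
    have e2 := hGinv _ hztnn
    rw [h2] at e1
    rw [e2] at e1
    exact absurd e1 h.ne'
  have hGfin : Ginv (G α + ∫ s in (0:ℝ)..t, f s) = x := by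
    rw [← hGx]; exact hGinv x hx0
  rw [hGfin]
  exact le_trans (hmain t ht.1) hle
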